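/- Let G be a graph of order n with no component of order less than 3, and let 𝒢 be an arbitrary Abelian group of order at least 2n. Then there exists an edge labeling f: E(G) → 𝒢 \ {0} such that the induced vertex weights (the sum in 𝒢 of the labels of edges incident to each vertex) are pairwise distinct and no vertex has weight equal to 0. -/

import Mathlib

open Finset
set_option linter.unusedSectionVars false
set_option maxHeartbeats 1000000

namespace Stmt2

variable {V : Type} [Fintype V] [DecidableEq V] {𝒢 : Type} [AddCommGroup 𝒢]

abbrev Step (V : Type) := V ⊕ (V × V × V)

def flat : List (Step V) → List V
  | [] => []
  | (.inl v) :: r => v :: flat r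
  | (.inr (A, B, C)) :: r => A :: B :: C :: flat r

variable (G : SimpleGraph V) [DecidableRel G.Adj]

def fl (g0 : 𝒢) (p : V → V) (x : V → 𝒢) (a b : V) : 𝒢 :=
  g0 + (if p a = b then x a else 0) + (if p b = a then x b else 0)

def wt (g0 : 𝒢) (p : V → V) (x : V → 𝒢) (v : V) : 𝒢 :=
  ∑ u ∈ G.neighborFinset v, fl g0 p x v u

lemma wt_eq (g0 : 𝒢) (p : V → V) (x : V → 𝒢) (v : V) :
    wt G g0 p x v = (G.neighborFinset v).card • g0
      + (if G.Adj v (p v) then x v else 0)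
      + ∑ u ∈ (G.neighborFinset v).filter (fun u => p u = v), x u := by
  unfold wt fl
  rw [Finset.sum_add_distrib, Finset.sum_add_distrib, Finset.sum_const]
  congr 1
  · congr 1
    rw [Finset.sum_ite_eq]
    simp [SimpleGraph.mem_neighborFinset]
  · rw [Finset.sum_filter]

variable (g0 : 𝒢) (p : V → V)

lemma wt_update_other (x : V → 𝒢) {v w : V} (hvw : v ≠ w) (hp : p v ≠ w) (c : 𝒢) :
    wt G g0 p (Function.update x v c) w = wt G g0 p x w := by
  rw [wt_eq, wt_eq, Function.update_of_ne (Ne.symm hvw)]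
  have hs : ∑ u ∈ (G.neighborFinset w).filter (fun u => p u = w),
      (Function.update x v c) u = ∑ u ∈ (G.neighborFinset w).filter (fun u => p u = w), x u := by
    apply Finset.sum_congr rfl
    intro u hu
    rw [Finset.mem_filter] at hu
    have huv : u ≠ v := fun h => hp (h ▸ hu.2)
    rw [Function.update_of_ne huv]
  rw [hs]

lemma wt_update_self (x : V → 𝒢) {v : V} (hadj : G.Adj v (p v)) (c : 𝒢) :
    wt G g0 p (Function.update x v c) v = c + wt G g0 p (Function.update x v 0) v := by
  rw [wt_eq, wt_eq, if_pos hadj, if_pos hadj, Function.update_self, Function.update_self]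
  have hs : ∀ d : 𝒢, ∑ u ∈ (G.neighborFinset v).filter (fun u => p u = v),
      (Function.update x v d) u = ∑ u ∈ (G.neighborFinset v).filter (fun u => p u = v), x u := by
    intro d
    apply Finset.sum_congr rfl
    intro u hu
    rw [Finset.mem_filter, SimpleGraph.mem_neighborFinset] at hu
    exact Function.update_of_ne (G.ne_of_adj hu.1).symm _ _
  rw [hs, hs]
  abel

lemma wt_update_parent (x : V → 𝒢) {v w : V} (hp : p v = w) (hadj : G.Adj v w) (c : 𝒢) :
    wt G g0 p (Function.update x v c) w = c + wt G g0 p (Function.update x v 0) w := by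
  have hvw : v ≠ w := G.ne_of_adj hadj
  rw [wt_eq, wt_eq]
  rw [Function.update_of_ne (Ne.symm hvw), Function.update_of_ne (Ne.symm hvw)]
  have hmem : v ∈ (G.neighborFinset w).filter (fun u => p u = w) := by
    rw [Finset.mem_filter, SimpleGraph.mem_neighborFinset]
    exact ⟨hadj.symm, hp⟩
  rw [Finset.sum_update_of_mem hmem, Finset.sum_update_of_mem hmem]
  abel


lemma fl_symm (g0 : 𝒢) (p : V → V) (x : V → 𝒢) (a b : V) :
    fl g0 p x a b = fl g0 p x b a := by
  unfold fl; abel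

lemma flat_append (P Q : List (Step V)) : flat (P ++ Q) = flat P ++ flat Q := by
  induction P with
  | nil => rfl
  | cons s r ih =>
    cases s with
    | inl v => simp [flat, ih]
    | inr t => obtain ⟨A, B, C⟩ := t; simp [flat, ih]

variable (p : V → V)

def StepsOk : List (Step V) → Prop
  | [] => True
  | (.inl v) :: r => p v ≠ v ∧ G.Adj v (p v) ∧ p v ∈ flat r ∧ StepsOk r
  | (.inr (A, B, C)) :: r => (p A = B ∨ p A = C) ∧ p B = C ∧ p C = C ∧
      G.Adj A (p A) ∧ G.Adj B C ∧ StepsOk r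

lemma stepsOk_congr {p q : V → V} (P : List (Step V))
    (h : ∀ v ∈ flat P, p v = q v) (hP : StepsOk G p P) : StepsOk G q P := by
  induction P with
  | nil => trivial
  | cons s r ih =>
    cases s with
    | inl v =>
      obtain ⟨h1, h2, h3, h4⟩ := hP
      have hv : p v = q v := h v (by simp [flat])
      refine ⟨hv ▸ h1, hv ▸ h2, ?_, ih (fun u hu => h u (by simp [flat, hu])) h4⟩
      · rw [← hv]; exact h3
    | inr t =>
      obtain ⟨A, B, C⟩ := t
      obtain ⟨h1, h2, h3, h4, h5, h6⟩ := hP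
      have hA : p A = q A := h A (by simp [flat])
      have hB : p B = q B := h B (by simp [flat])
      have hC : p C = q C := h C (by simp [flat])
      exact ⟨hA ▸ h1, hB ▸ h2, hC ▸ h3, hA ▸ h4, h5,
        ih (fun u hu => h u (by simp [flat, hu])) h6⟩

lemma stepsOk_append {P Q : List (Step V)} (hP : StepsOk G p P) (hQ : StepsOk G p Q) :
    StepsOk G p (P ++ Q) := by
  induction P with
  | nil => exact hQ
  | cons s r ih =>
    cases s with
    | inl v =>
      obtain ⟨h1, h2, h3, h4⟩ := hP
      refine ⟨h1, h2, ?_, ih h4⟩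
      show p v ∈ flat (r ++ Q)
      rw [flat_append]
      exact List.mem_append_left _ h3
    | inr t =>
      obtain ⟨A, B, C⟩ := t
      obtain ⟨h1, h2, h3, h4, h5, h6⟩ := hP
      exact ⟨h1, h2, h3, h4, h5, ih h6⟩

lemma parentMem {P : List (Step V)} (hP : StepsOk G p P) :
    ∀ u ∈ flat P, p u = u ∨ p u ∈ flat P := by
  induction P with
  | nil => intro u hu; cases hu
  | cons s r ih =>
    cases s with
    | inl v =>
      obtain ⟨h1, h2, h3, h4⟩ := hP
      intro u hu
      rcases List.mem_cons.1 hu with rfl | hu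
      · exact Or.inr (List.mem_cons_of_mem _ h3)
      · rcases ih h4 u hu with h | h
        · exact Or.inl h
        · exact Or.inr (List.mem_cons_of_mem _ h)
    | inr t =>
      obtain ⟨A, B, C⟩ := t
      obtain ⟨h1, h2, h3, h4, h5, h6⟩ := hP
      intro u hu
      simp only [flat, List.mem_cons] at hu ⊢
      rcases hu with rfl | rfl | rfl | hu
      · rcases h1 with h | h
        · exact Or.inr (Or.inr (Or.inl h))
        · exact Or.inr (Or.inr (Or.inr (Or.inl h)))
      · exact Or.inr (Or.inr (Or.inr (Or.inl h2)))
      · exact Or.inl h3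
      · rcases ih h6 u hu with h | h
        · exact Or.inl h
        · exact Or.inr (Or.inr (Or.inr (Or.inr h)))

lemma noTwoCycle {P : List (Step V)} (hP : StepsOk G p P) (hnd : (flat P).Nodup) :
    ∀ u v, u ∈ flat P → p u = v → p v = u → u = v := by
  induction P with
  | nil => intro u v hu; cases hu
  | cons s r ih =>
    cases s with
    | inl w =>
      obtain ⟨h1, h2, h3, h4⟩ := hP
      have hnd' : (flat r).Nodup := (List.nodup_cons.1 hnd).2
      have hw : w ∉ flat r := (List.nodup_cons.1 hnd).1
      intro u v hu hpu hpv
      rcases List.mem_cons.1 hu with rfl | hu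
      · -- u = w, v = p w ∈ flat r
        exfalso
        have hv : v ∈ flat r := hpu ▸ h3
        rcases parentMem G p h4 v hv with h | h
        · rw [h] at hpv; exact hw (hpv ▸ hv)
        · rw [hpv] at h; exact hw h
      · rcases parentMem G p h4 u hu with h | h
        · rw [hpu] at h; exact h.symm
        · exact ih h4 hnd' u v hu hpu hpv
    | inr t =>
      obtain ⟨A, B, C⟩ := t
      obtain ⟨h1, h2, h3, h4, h5, h6⟩ := hP
      simp only [flat, List.nodup_cons, List.mem_cons] at hnd
      obtain ⟨hA, hB, hC, hnd'⟩ := hnd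
      have hAB : A ≠ B := fun h => hA (Or.inl h)
      have hAC : A ≠ C := fun h => hA (Or.inr (Or.inl h))
      have hBC : B ≠ C := fun h => hB (Or.inl h)
      intro u v hu hpu hpv
      simp only [flat, List.mem_cons] at hu
      rcases hu with rfl | rfl | rfl | hu
      · exfalso
        rcases h1 with h | h
        · rw [h] at hpu; subst hpu
          rw [h2] at hpv
          exact hAC hpv.symm
        · rw [h] at hpu; subst hpu
          rw [h3] at hpv
          exact hAC hpv.symm
      · exfalso
        rw [h2] at hpu; subst hpu
        rw [h3] at hpv
        exact hBC hpv.symm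
      · rw [h3] at hpu; exact hpu
      · rcases parentMem G p h6 u hu with h | h
        · rw [hpu] at h; exact h.symm
        · exact ih h6 hnd' u v hu hpu hpv


section Greedy
variable [Fintype 𝒢]

lemma exists_notMem (F : Finset 𝒢) (h : F.card < Fintype.card 𝒢) : ∃ a, a ∉ F := by
  by_contra h'
  push_neg at h'
  have : (univ : Finset 𝒢) ⊆ F := fun a _ => h' a
  have := Finset.card_le_card this
  rw [Finset.card_univ] at this
  omega

theorem greedy (g0 : 𝒢) (p : V → V) (hcard : 2 * Fintype.card V ≤ Fintype.card 𝒢) :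
    ∀ (P : List (Step V)) (x0 : V → 𝒢),
    (flat P).Nodup → StepsOk G p P →
    (∀ v w, v ∉ flat P → w ∉ flat P → v ≠ w → wt G g0 p x0 v ≠ wt G g0 p x0 w) →
    (∀ v, v ∉ flat P → wt G g0 p x0 v ≠ 0) →
    (∀ v, v ∉ flat P → p v ≠ v → x0 v ≠ -g0) →
    ∃ x : V → 𝒢, (∀ v, p v ≠ v → x v ≠ -g0) ∧
      (∀ v w, v ≠ w → wt G g0 p x v ≠ wt G g0 p x w) ∧
      (∀ v, wt G g0 p x v ≠ 0) := by
  classical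
  intro P
  induction P with
  | nil =>
    intro x0 _ _ hW1 hW2 hW3
    exact ⟨x0, fun v hv => hW3 v (by simp [flat]) hv,
      fun v w hvw => hW1 v w (by simp [flat]) (by simp [flat]) hvw,
      fun v => hW2 v (by simp [flat])⟩
  | cons s rest ih =>
    cases s with
    | inl v =>
      intro x0 hnd hok hW1 hW2 hW3
      obtain ⟨h1, h2, h3, h4⟩ := hok
      have hflat : flat (Sum.inl v :: rest) = v :: flat rest := rfl
      rw [hflat] at hnd hW1 hW2 hW3
      have hvr : v ∉ flat rest := (List.nodup_cons.1 hnd).1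
      have hnd' : (flat rest).Nodup := (List.nodup_cons.1 hnd).2
      -- the forbidden set
      set W : Finset 𝒢 :=
        (univ.filter (fun w => w ∉ v :: flat rest)).image (wt G g0 p x0) with hWdef
      set K : 𝒢 := wt G g0 p (Function.update x0 v 0) v with hKdef
      set F : Finset 𝒢 := insert (-g0) ((insert 0 W).image (fun z => z - K)) with hFdef
      -- cardinality bound
      have hsub : ({v, p v} : Finset V) ⊆ (v :: flat rest).toFinset := by
        intro u hu
        rw [List.mem_toFinset]
        rcases Finset.mem_insert.1 hu with rfl | hu
        · exact List.mem_cons_self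
        · rw [Finset.mem_singleton] at hu
          subst hu
          exact List.mem_cons_of_mem _ h3
      have hcard2 : 2 ≤ (v :: flat rest).toFinset.card := by
        have : ({v, p v} : Finset V).card = 2 := by
          rw [Finset.card_insert_of_notMem (by simp [Ne.symm h1]), Finset.card_singleton]
        rw [← this]
        exact Finset.card_le_card hsub
      have hfilter : (univ.filter (fun w => w ∉ v :: flat rest)).card
          = Fintype.card V - (v :: flat rest).toFinset.card := by
        have : univ.filter (fun w => w ∉ v :: flat rest) = univ \ (v :: flat rest).toFinset := by
          ext u
          simp [List.mem_toFinset]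
        rw [this, Finset.card_sdiff_of_subset (Finset.subset_univ _), Finset.card_univ]
      have hWcard : W.card ≤ Fintype.card V - 2 := by
        calc W.card ≤ (univ.filter (fun w => w ∉ v :: flat rest)).card := Finset.card_image_le
        _ ≤ Fintype.card V - 2 := by rw [hfilter]; omega
      have hn : 2 ≤ Fintype.card V := by
        calc 2 ≤ (v :: flat rest).toFinset.card := hcard2
        _ ≤ (univ : Finset V).card := Finset.card_le_card (Finset.subset_univ _)
        _ = Fintype.card V := Finset.card_univ
      have hFcard : F.card < Fintype.card 𝒢 := by
        calc F.card ≤ ((insert 0 W).image (fun z => z - K)).card + 1 := Finset.card_insert_le _ _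
        _ ≤ (insert 0 W).card + 1 := by
            have := Finset.card_image_le (s := insert 0 W) (f := fun z => z - K); omega
        _ ≤ W.card + 2 := by have := Finset.card_insert_le 0 W; omega
        _ ≤ Fintype.card V := by omega
        _ < Fintype.card 𝒢 := by omega
      obtain ⟨a, ha⟩ := exists_notMem F hFcard
      have ha1 : a ≠ -g0 := by
        intro h
        apply ha
        rw [hFdef, h]
        exact Finset.mem_insert_self _ _
      have ha2 : ∀ z ∈ insert 0 W, a + K ≠ z := by
        intro z hz h
        apply ha
        rw [hFdef]
        exact Finset.mem_insert_of_mem (Finset.mem_image.2 ⟨z, hz, (eq_sub_of_add_eq h).symm⟩)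
      set x1 : V → 𝒢 := Function.update x0 v a with hx1def
      have hstab : ∀ w, w ∉ v :: flat rest → wt G g0 p x1 w = wt G g0 p x0 w := by
        intro w hw
        have hvw : v ≠ w := fun h => hw (h ▸ List.mem_cons_self)
        have hpw : p v ≠ w := fun h => hw (h ▸ List.mem_cons_of_mem _ h3)
        exact wt_update_other G g0 p x0 hvw hpw a
      have hwv : wt G g0 p x1 v = a + K := wt_update_self G g0 p x0 h2 a
      have hmemW : ∀ w, w ∉ v :: flat rest → wt G g0 p x0 w ∈ W := by
        intro w hw
        exact Finset.mem_image.2 ⟨w, Finset.mem_filter.2 ⟨Finset.mem_univ _, hw⟩, rfl⟩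
      have hcases : ∀ w, w ∉ flat rest → w = v ∨ w ∉ v :: flat rest := by
        intro w hw
        by_cases h : w = v
        · exact Or.inl h
        · exact Or.inr (fun hc => (List.mem_cons.1 hc).elim h hw)
      apply ih x1 hnd' h4
      · intro v' w' hv' hw' hvw
        rcases hcases v' hv' with rfl | hv'
        · rcases hcases w' hw' with rfl | hw'
          · exact absurd rfl hvw
          · rw [hwv, hstab w' hw']
            exact ha2 _ (Finset.mem_insert_of_mem (hmemW w' hw'))
        · rcases hcases w' hw' with rfl | hw'
          · rw [hwv, hstab v' hv']
            exact fun h => ha2 _ (Finset.mem_insert_of_mem (hmemW v' hv')) h.symm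
          · rw [hstab v' hv', hstab w' hw']
            exact hW1 v' w' hv' hw' hvw
      · intro w hw
        rcases hcases w hw with rfl | hw
        · rw [hwv]; exact ha2 0 (Finset.mem_insert_self _ _)
        · rw [hstab w hw]; exact hW2 w hw
      · intro w hw hpw
        rcases hcases w hw with rfl | hw
        · show Function.update x0 w a w ≠ -g0
          rw [Function.update_self]; exact ha1
        · show Function.update x0 v a w ≠ -g0
          have hwv2 : w ≠ v := fun h => hw (h ▸ List.mem_cons_self)
          rw [Function.update_of_ne hwv2]
          exact hW3 w hw hpw
    | inr t =>
      obtain ⟨A, B, C⟩ := t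
      intro x0 hnd hok hW1 hW2 hW3
      obtain ⟨h1, h2, h3, h4, h5, h6⟩ := hok
      have hflat : flat (Sum.inr (A, B, C) :: rest) = A :: B :: C :: flat rest := rfl
      rw [hflat] at hnd hW1 hW2 hW3
      simp only [List.nodup_cons, List.mem_cons] at hnd
      obtain ⟨hA, hB, hC, hnd'⟩ := hnd
      have hAB : A ≠ B := fun h => hA (Or.inl h)
      have hAC : A ≠ C := fun h => hA (Or.inr (Or.inl h))
      have hBC : B ≠ C := fun h => hB (Or.inl h)
      have hAr : A ∉ flat rest := fun h => hA (Or.inr (Or.inr h))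
      have hBr : B ∉ flat rest := fun h => hB (Or.inr h)
      have hCr : C ∉ flat rest := hC
      set W : Finset 𝒢 :=
        (univ.filter (fun w => w ∉ A :: B :: C :: flat rest)).image (wt G g0 p x0) with hWdef
      set KA : 𝒢 := wt G g0 p (Function.update x0 A 0) A with hKAdef
      set base : V → 𝒢 := Function.update x0 B 0 with hbasedef
      set Kb : 𝒢 := wt G g0 p (Function.update base A 0) B with hKbdef
      set Kc : 𝒢 := wt G g0 p (Function.update base A 0) C with hKcdef
      set δ : 𝒢 := if p A = B then Kc - Kb else Kb - Kc with hδdef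
      set Fa : Finset 𝒢 := insert (-g0) (insert δ ((insert 0 W).image (fun z => z - KA)))
        with hFadef
      -- cardinality
      have hsub : ({A, B, C} : Finset V) ⊆ (A :: B :: C :: flat rest).toFinset := by
        intro u hu
        rw [List.mem_toFinset]
        simp only [Finset.mem_insert, Finset.mem_singleton] at hu
        rcases hu with rfl | rfl | rfl <;> simp
      have hcard3 : 3 ≤ (A :: B :: C :: flat rest).toFinset.card := by
        have : ({A, B, C} : Finset V).card = 3 := by
          rw [Finset.card_insert_of_notMem (by simp [hAB, hAC]),
            Finset.card_insert_of_notMem (by simp [hBC]), Finset.card_singleton]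
        rw [← this]
        exact Finset.card_le_card hsub
      have hfilter : (univ.filter (fun w => w ∉ A :: B :: C :: flat rest)).card
          = Fintype.card V - (A :: B :: C :: flat rest).toFinset.card := by
        have : univ.filter (fun w => w ∉ A :: B :: C :: flat rest)
            = univ \ (A :: B :: C :: flat rest).toFinset := by
          ext u
          simp [List.mem_toFinset]
        rw [this, Finset.card_sdiff_of_subset (Finset.subset_univ _), Finset.card_univ]
      have hWcard : W.card ≤ Fintype.card V - 3 := by
        calc W.card ≤ (univ.filter (fun w => w ∉ A :: B :: C :: flat rest)).card :=
            Finset.card_image_le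
        _ ≤ Fintype.card V - 3 := by rw [hfilter]; omega
      have hn : 3 ≤ Fintype.card V := by
        calc 3 ≤ (A :: B :: C :: flat rest).toFinset.card := hcard3
        _ ≤ (univ : Finset V).card := Finset.card_le_card (Finset.subset_univ _)
        _ = Fintype.card V := Finset.card_univ
      have hFacard : Fa.card < Fintype.card 𝒢 := by
        calc Fa.card ≤ (insert δ ((insert 0 W).image (fun z => z - KA))).card + 1 :=
            Finset.card_insert_le _ _
        _ ≤ ((insert 0 W).image (fun z => z - KA)).card + 2 := by
            have := Finset.card_insert_le δ ((insert 0 W).image (fun z => z - KA)); omega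
        _ ≤ (insert 0 W).card + 2 := by
            have := Finset.card_image_le (s := insert 0 W) (f := fun z => z - KA); omega
        _ ≤ W.card + 3 := by have := Finset.card_insert_le 0 W; omega
        _ ≤ Fintype.card V := by omega
        _ < Fintype.card 𝒢 := by omega
      obtain ⟨a, ha⟩ := exists_notMem Fa hFacard
      have ha1 : a ≠ -g0 := by
        intro h
        apply ha
        rw [hFadef, h]
        exact Finset.mem_insert_self _ _
      have haδ : a ≠ δ := by
        intro h
        apply ha
        rw [hFadef, h]
        exact Finset.mem_insert_of_mem (Finset.mem_insert_self _ _)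
      have ha2 : ∀ z ∈ insert 0 W, a + KA ≠ z := by
        intro z hz h
        apply ha
        rw [hFadef]
        exact Finset.mem_insert_of_mem (Finset.mem_insert_of_mem (Finset.mem_image.2
          ⟨z, hz, (eq_sub_of_add_eq h).symm⟩))
      set x1 : V → 𝒢 := Function.update x0 A a with hx1def
      have hpA : p A ≠ A := G.ne_of_adj (G.adj_symm h4)
      have hpAne : ∀ w, w ∉ A :: B :: C :: flat rest → p A ≠ w := by
        intro w hw h
        rcases h1 with h' | h'
        · exact hw (h ▸ h' ▸ List.mem_cons_of_mem _ (List.mem_cons_self))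
        · exact hw (h ▸ h' ▸ List.mem_cons_of_mem _ (List.mem_cons_of_mem _
            (List.mem_cons_self)))
      have hstab1 : ∀ w, w ∉ A :: B :: C :: flat rest → wt G g0 p x1 w = wt G g0 p x0 w := by
        intro w hw
        have hvw : A ≠ w := fun h => hw (h ▸ List.mem_cons_self)
        exact wt_update_other G g0 p x0 hvw (hpAne w hw) a
      have hwA : wt G g0 p x1 A = a + KA := wt_update_self G g0 p x0 h4 a
      set KB1 : 𝒢 := wt G g0 p (Function.update x1 B 0) B with hKB1def
      set KC1 : 𝒢 := wt G g0 p (Function.update x1 B 0) C with hKC1def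
      have hcomm : Function.update x1 B 0 = Function.update base A a := by
        rw [hx1def, hbasedef]
        exact Function.update_comm hAB a (0 : 𝒢) x0
      have key : KB1 ≠ KC1 := by
        rcases h1 with hp' | hp'
        · -- p A = B
          have hKB1 : KB1 = a + Kb := by
            rw [hKB1def, hcomm, wt_update_parent G g0 p base hp' (hp' ▸ h4) a, hKbdef]
          have hKC1 : KC1 = Kc := by
            rw [hKC1def, hcomm, hKcdef,
              wt_update_other G g0 p base hAC (hp' ▸ hBC) a,
              wt_update_other G g0 p base hAC (hp' ▸ hBC) 0]
          rw [hKB1, hKC1]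
          intro h
          apply haδ
          rw [hδdef, if_pos hp']
          exact eq_sub_of_add_eq h
        · -- p A = C
          have hpAB : p A ≠ B := by rw [hp']; exact hBC.symm
          have hKB1 : KB1 = Kb := by
            rw [hKB1def, hcomm, hKbdef,
              wt_update_other G g0 p base hAB hpAB a,
              wt_update_other G g0 p base hAB hpAB 0]
          have hKC1 : KC1 = a + Kc := by
            rw [hKC1def, hcomm, wt_update_parent G g0 p base hp' (hp' ▸ h4) a, hKcdef]
          rw [hKB1, hKC1]
          intro h
          apply haδ
          rw [hδdef, if_neg hpAB]
          exact eq_sub_of_add_eq h.symm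
      -- second choice
      set Fb : Finset 𝒢 := insert (-g0)
        (((insert (a + KA) (insert 0 W)).image (fun z => z - KB1)) ∪
         ((insert (a + KA) (insert 0 W)).image (fun z => z - KC1))) with hFbdef
      have hFbcard : Fb.card < Fintype.card 𝒢 := by
        have hu := Finset.card_union_le ((insert (a + KA) (insert 0 W)).image (fun z => z - KB1))
          ((insert (a + KA) (insert 0 W)).image (fun z => z - KC1))
        have h1' := Finset.card_image_le (s := insert (a + KA) (insert 0 W)) (f := fun z => z - KB1)
        have h2' := Finset.card_image_le (s := insert (a + KA) (insert 0 W)) (f := fun z => z - KC1)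
        have h3' := Finset.card_insert_le (a + KA) (insert 0 W)
        have h4' := Finset.card_insert_le (0 : 𝒢) W
        have h5' := Finset.card_insert_le (-g0)
          (((insert (a + KA) (insert 0 W)).image (fun z => z - KB1)) ∪
           ((insert (a + KA) (insert 0 W)).image (fun z => z - KC1)))
        rw [← hFbdef] at h5'
        omega
      obtain ⟨b, hb⟩ := exists_notMem Fb hFbcard
      have hb1 : b ≠ -g0 := by
        intro h
        apply hb
        rw [hFbdef, h]
        exact Finset.mem_insert_self _ _
      have hbB : ∀ z ∈ insert (a + KA) (insert 0 W), b + KB1 ≠ z := by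
        intro z hz h
        apply hb
        rw [hFbdef]
        exact Finset.mem_insert_of_mem (Finset.mem_union_left _ (Finset.mem_image.2
          ⟨z, hz, (eq_sub_of_add_eq h).symm⟩))
      have hbC : ∀ z ∈ insert (a + KA) (insert 0 W), b + KC1 ≠ z := by
        intro z hz h
        apply hb
        rw [hFbdef]
        exact Finset.mem_insert_of_mem (Finset.mem_union_right _ (Finset.mem_image.2
          ⟨z, hz, (eq_sub_of_add_eq h).symm⟩))
      set x2 : V → 𝒢 := Function.update x1 B b with hx2def
      have hadjB : G.Adj B (p B) := by rw [h2]; exact h5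
      have hwB : wt G g0 p x2 B = b + KB1 := wt_update_self G g0 p x1 hadjB b
      have hwC : wt G g0 p x2 C = b + KC1 := wt_update_parent G g0 p x1 h2 h5 b
      have hwA2 : wt G g0 p x2 A = a + KA := by
        rw [hx2def, wt_update_other G g0 p x1 hAB.symm (h2 ▸ hAC.symm) b]
        exact hwA
      have hstab2 : ∀ w, w ∉ A :: B :: C :: flat rest → wt G g0 p x2 w = wt G g0 p x0 w := by
        intro w hw
        have hBw : B ≠ w := fun h => hw (h ▸ List.mem_cons_of_mem _ (List.mem_cons_self))
        have hCw : p B ≠ w := by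
          rw [h2]
          exact fun h => hw (h ▸ List.mem_cons_of_mem _ (List.mem_cons_of_mem _
            (List.mem_cons_self)))
        rw [hx2def, wt_update_other G g0 p x1 hBw hCw b]
        exact hstab1 w hw
      have hmemW : ∀ w, w ∉ A :: B :: C :: flat rest → wt G g0 p x0 w ∈ W := by
        intro w hw
        exact Finset.mem_image.2 ⟨w, Finset.mem_filter.2 ⟨Finset.mem_univ _, hw⟩, rfl⟩
      have hcases : ∀ w, w ∉ flat rest →
          w = A ∨ w = B ∨ w = C ∨ w ∉ A :: B :: C :: flat rest := by
        intro w hw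
        by_cases h' : w = A
        · exact Or.inl h'
        by_cases h'' : w = B
        · exact Or.inr (Or.inl h'')
        by_cases h''' : w = C
        · exact Or.inr (Or.inr (Or.inl h'''))
        refine Or.inr (Or.inr (Or.inr ?_))
        intro hc
        rcases List.mem_cons.1 hc with rfl | hc
        · exact h' rfl
        rcases List.mem_cons.1 hc with rfl | hc
        · exact h'' rfl
        rcases List.mem_cons.1 hc with rfl | hc
        · exact h''' rfl
        exact hw hc
      -- the four weights: A ↦ a + KA, B ↦ b + KB1, C ↦ b + KC1, old w ↦ wt x0 w
      have hwval : ∀ w, w ∉ flat rest → (wt G g0 p x2 w = a + KA ∧ w = A) ∨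
          (wt G g0 p x2 w = b + KB1 ∧ w = B) ∨ (wt G g0 p x2 w = b + KC1 ∧ w = C) ∨
          (wt G g0 p x2 w = wt G g0 p x0 w ∧ w ∉ A :: B :: C :: flat rest) := by
        intro w hw
        rcases hcases w hw with rfl | rfl | rfl | hw'
        · exact Or.inl ⟨hwA2, rfl⟩
        · exact Or.inr (Or.inl ⟨hwB, rfl⟩)
        · exact Or.inr (Or.inr (Or.inl ⟨hwC, rfl⟩))
        · exact Or.inr (Or.inr (Or.inr ⟨hstab2 w hw', hw'⟩))
      have hABne : (a + KA) ≠ (b + KB1) :=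
        fun h => hbB (a + KA) (Finset.mem_insert_self _ _) h.symm
      have hACne : (a + KA) ≠ (b + KC1) :=
        fun h => hbC (a + KA) (Finset.mem_insert_self _ _) h.symm
      have hBCne : (b + KB1) ≠ (b + KC1) := fun h => key (by exact add_left_cancel h)
      have hAold : ∀ w, w ∉ A :: B :: C :: flat rest → (a + KA) ≠ wt G g0 p x0 w :=
        fun w hw => ha2 _ (Finset.mem_insert_of_mem (hmemW w hw))
      have hBold : ∀ w, w ∉ A :: B :: C :: flat rest → (b + KB1) ≠ wt G g0 p x0 w :=
        fun w hw => hbB _ (Finset.mem_insert_of_mem (Finset.mem_insert_of_mem (hmemW w hw)))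
      have hCold : ∀ w, w ∉ A :: B :: C :: flat rest → (b + KC1) ≠ wt G g0 p x0 w :=
        fun w hw => hbC _ (Finset.mem_insert_of_mem (Finset.mem_insert_of_mem (hmemW w hw)))
      apply ih x2 hnd' h6
      · intro v' w' hv' hw' hvw
        rcases hwval v' hv' with ⟨hv1, rfl⟩ | ⟨hv1, rfl⟩ | ⟨hv1, rfl⟩ | ⟨hv1, hv2⟩ <;>
          rcases hwval w' hw' with ⟨hw1, h2'⟩ | ⟨hw1, h2'⟩ | ⟨hw1, h2'⟩ | ⟨hw1, h2'⟩ <;>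
          rw [hv1, hw1]
        · exact absurd (h2' ▸ rfl) hvw
        · exact hABne
        · exact hACne
        · exact hAold w' h2'
        · exact hABne.symm
        · exact absurd (h2' ▸ rfl) hvw
        · exact hBCne
        · exact hBold w' h2'
        · exact hACne.symm
        · exact hBCne.symm
        · exact absurd (h2' ▸ rfl) hvw
        · exact hCold w' h2'
        · exact fun h => hAold v' hv2 h.symm
        · exact fun h => hBold v' hv2 h.symm
        · exact fun h => hCold v' hv2 h.symm
        · exact hW1 v' w' hv2 h2' hvw
      · intro w hw
        rcases hwval w hw with ⟨hv1, rfl⟩ | ⟨hv1, rfl⟩ | ⟨hv1, rfl⟩ | ⟨hv1, hv2⟩ <;> rw [hv1]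
        · exact ha2 0 (Finset.mem_insert_self _ _)
        · exact hbB 0 (Finset.mem_insert_of_mem (Finset.mem_insert_self _ _))
        · exact hbC 0 (Finset.mem_insert_of_mem (Finset.mem_insert_self _ _))
        · exact hW2 w hv2
      · intro w hw hpw
        rcases hcases w hw with rfl | rfl | rfl | hw'
        · show Function.update x1 B b w ≠ -g0
          rw [Function.update_of_ne hAB]
          show Function.update x0 w a w ≠ -g0
          rw [Function.update_self]
          exact ha1
        · show Function.update x1 w b w ≠ -g0
          rw [Function.update_self]
          exact hb1
        · exact absurd h3 hpw
        · have hwA' : w ≠ A := fun h => hw' (h ▸ List.mem_cons_self)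
          have hwB' : w ≠ B := fun h => hw' (h ▸ List.mem_cons_of_mem _ (List.mem_cons_self))
          show Function.update x1 B b w ≠ -g0
          rw [Function.update_of_ne hwB']
          show Function.update x0 A a w ≠ -g0
          rw [Function.update_of_ne hwA']
          exact hW3 w hw' hpw


end Greedy

lemma exists_boundary {x y : V} (w : G.Walk x y) (L : Set V) (hx : x ∉ L) (hy : y ∈ L) :
    ∃ a b, a ∉ L ∧ b ∈ L ∧ G.Adj a b := by
  induction w with
  | nil => exact absurd hy hx
  | @cons u v z h q ih =>
    by_cases hv : v ∈ L
    · exact ⟨u, v, hx, hv, h⟩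
    · exact ih hv hy

lemma genBuild (v0 : V) : ∀ (k : ℕ) (D : Finset V) (P0 : List (Step V)) (q0 : V → V),
    v0 ∈ D → (∀ u ∈ D, G.Reachable v0 u) →
    ((univ.filter (fun u => G.Reachable v0 u)) \ D).card = k →
    (flat P0).Nodup → (∀ u, u ∈ flat P0 ↔ u ∈ D) → StepsOk G q0 P0 →
    (∀ u, u ∉ D → q0 u = u) →
    ∃ (P : List (Step V)) (q : V → V), (flat P).Nodup ∧
      (∀ u, u ∈ flat P ↔ G.Reachable v0 u) ∧ StepsOk G q P ∧
      (∀ u, ¬ G.Reachable v0 u → q u = u) := by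
  classical
  intro k
  induction k with
  | zero =>
    intro D P0 q0 hv0 hD2 hcard hnd hmem hok hroot
    refine ⟨P0, q0, hnd, ?_, hok, ?_⟩
    · intro u
      rw [hmem u]
      constructor
      · intro hu; exact hD2 u hu
      · intro hu
        by_contra hu'
        have : u ∈ (univ.filter (fun u => G.Reachable v0 u)) \ D := by
          rw [Finset.mem_sdiff, Finset.mem_filter]
          exact ⟨⟨Finset.mem_univ _, hu⟩, hu'⟩
        rw [Finset.card_eq_zero.1 hcard] at this
        exact absurd this (Finset.notMem_empty u)
    · intro u hu
      apply hroot
      intro hu'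
      exact hu (hD2 u hu')
  | succ k ih =>
    intro D P0 q0 hv0 hD2 hcard hnd hmem hok hroot
    have hne : ((univ.filter (fun u => G.Reachable v0 u)) \ D).Nonempty := by
      rw [← Finset.card_pos, hcard]; omega
    obtain ⟨x2, hx2⟩ := hne
    rw [Finset.mem_sdiff, Finset.mem_filter] at hx2
    obtain ⟨⟨-, hx2r⟩, hx2D⟩ := hx2
    obtain ⟨a, c, haD, hcD, hadj⟩ := exists_boundary G (hx2r.symm.some) (↑D : Set V)
      (by simpa using hx2D) (by simpa using hv0)
    simp only [Finset.coe_mem, Finset.mem_coe] at haD hcD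
    have hareach : G.Reachable v0 a := (hD2 c hcD).trans hadj.symm.reachable
    have hane : a ≠ c := G.ne_of_adj hadj
    refine ih (insert a D) (.inl a :: P0) (Function.update q0 a c)
      (Finset.mem_insert_of_mem hv0) ?_ ?_ ?_ ?_ ?_ ?_
    · intro u hu
      rcases Finset.mem_insert.1 hu with rfl | hu
      · exact hareach
      · exact hD2 u hu
    · have hmemsd : a ∈ (univ.filter (fun u => G.Reachable v0 u)) \ D := by
        rw [Finset.mem_sdiff, Finset.mem_filter]
        exact ⟨⟨Finset.mem_univ _, hareach⟩, haD⟩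
      rw [Finset.sdiff_insert, Finset.card_erase_of_mem hmemsd, hcard]
      omega
    · rw [show flat (Sum.inl a :: P0) = a :: flat P0 from rfl, List.nodup_cons]
      exact ⟨fun h => haD ((hmem a).1 h), hnd⟩
    · intro u
      rw [show flat (Sum.inl a :: P0) = a :: flat P0 from rfl, List.mem_cons, hmem u,
        Finset.mem_insert]
    · refine ⟨?_, ?_, ?_, ?_⟩
      · rw [Function.update_self]; exact hane.symm
      · rw [Function.update_self]; exact hadj
      · rw [Function.update_self]; exact (hmem c).2 hcD
      · apply stepsOk_congr G P0 _ hok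
        intro v hv
        have hva : v ≠ a := fun h => haD (by rw [← h]; exact (hmem v).1 hv)
        exact (Function.update_of_ne hva _ _).symm
    · intro u hu
      rw [Finset.mem_insert] at hu
      push_neg at hu
      rw [Function.update_of_ne hu.1]
      exact hroot u hu.2



lemma compPlan (v0 : V) (hcomp3 : 3 ≤ (G.connectedComponentMk v0).supp.ncard) :
    ∃ (P : List (Step V)) (q : V → V), (flat P).Nodup ∧
      (∀ u, u ∈ flat P ↔ G.Reachable v0 u) ∧ StepsOk G q P ∧
      (∀ u, ¬ G.Reachable v0 u → q u = u) := by
  classical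
  set SF : Finset V := univ.filter (fun u => G.Reachable v0 u) with hSFdef
  have hsupp : (G.connectedComponentMk v0).supp = ↑SF := by
    ext u
    rw [SimpleGraph.ConnectedComponent.mem_supp_iff, SimpleGraph.ConnectedComponent.eq]
    simp only [hSFdef, Finset.coe_filter, Finset.mem_univ, Set.mem_setOf_eq, true_and]
    exact ⟨fun h => h.symm, fun h => h.symm⟩
  rw [hsupp, Set.ncard_coe_finset] at hcomp3
  have hv0SF : v0 ∈ SF := by
    rw [hSFdef, Finset.mem_filter]
    exact ⟨Finset.mem_univ _, SimpleGraph.Reachable.refl v0⟩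
  -- pick s
  obtain ⟨x1, hx1SF, hx1ne⟩ := Finset.exists_mem_ne (s := SF) (by omega) v0
  rw [hSFdef, Finset.mem_filter] at hx1SF
  obtain ⟨sv, b1, hsL, hb1L, hadj1⟩ := exists_boundary G hx1SF.2.symm.some
    ({v0} : Set V) (by simpa using hx1ne) (by simp)
  rw [Set.mem_singleton_iff] at hb1L
  rw [Set.mem_singleton_iff] at hsL
  have hadj1' : G.Adj sv v0 := hb1L ▸ hadj1
  have hsreach : G.Reachable v0 sv := hadj1'.symm.reachable
  -- pick t
  have hsSF : sv ∈ SF := by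
    rw [hSFdef, Finset.mem_filter]; exact ⟨Finset.mem_univ _, hsreach⟩
  have hsub2 : ({v0, sv} : Finset V) ⊆ SF := by
    intro u hu
    rcases Finset.mem_insert.1 hu with rfl | hu
    · exact hv0SF
    · rw [Finset.mem_singleton] at hu; subst hu; exact hsSF
  have hne2 : (SF \ ({v0, sv} : Finset V)).Nonempty := by
    rw [← Finset.card_pos, Finset.card_sdiff_of_subset hsub2]
    have : ({v0, sv} : Finset V).card ≤ 2 := by
      apply le_trans (Finset.card_insert_le _ _)
      simp
    omega
  obtain ⟨x2, hx2⟩ := hne2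
  rw [Finset.mem_sdiff] at hx2
  obtain ⟨hx2SF, hx2n⟩ := hx2
  rw [hSFdef, Finset.mem_filter] at hx2SF
  obtain ⟨tv, d, htL, hdL, hadj2⟩ := exists_boundary G hx2SF.2.symm.some
    ({v0, sv} : Set V) (by simpa using hx2n) (by simp)
  have htreach : G.Reachable v0 tv := by
    rcases hdL with rfl | rfl
    · exact hadj2.symm.reachable
    · exact hsreach.trans hadj2.symm.reachable
  have htv0 : tv ≠ v0 := fun h => htL (by rw [h]; exact Set.mem_insert _ _)
  have hts : tv ≠ sv := fun h => htL (by rw [h]; exact Set.mem_insert_of_mem _ rfl)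
  have hsv0 : sv ≠ v0 := hsL
  -- initial data
  set q0 : V → V := fun u => if u = tv then d else if u = sv then v0 else u with hq0def
  set P0 : List (Step V) := [.inr (tv, sv, v0)] with hP0def
  have hq0t : q0 tv = d := by rw [hq0def]; simp
  have hq0s : q0 sv = v0 := by rw [hq0def]; simp [hts.symm]
  have hq0v : q0 v0 = v0 := by rw [hq0def]; simp [htv0.symm, hsv0.symm]
  have hflat0 : flat P0 = [tv, sv, v0] := rfl
  have hadjt : G.Adj tv (q0 tv) := by rw [hq0t]; exact hadj2
  apply genBuild G v0 ((SF \ ({tv, sv, v0} : Finset V)).card) {tv, sv, v0} P0 q0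
  · simp
  · intro u hu
    simp only [Finset.mem_insert, Finset.mem_singleton] at hu
    rcases hu with rfl | rfl | rfl
    · exact htreach
    · exact hsreach
    · exact SimpleGraph.Reachable.refl _
  · rfl
  · rw [hflat0]
    simp [htv0, hts, hsv0, List.nodup_cons]
  · intro u
    rw [hflat0]
    simp [Finset.mem_insert]
  · refine ⟨?_, hq0s, hq0v, hadjt, hadj1', trivial⟩
    rw [hq0t]
    rcases hdL with rfl | rfl
    · exact Or.inr rfl
    · exact Or.inl rfl
  · intro u hu
    simp only [Finset.mem_insert, Finset.mem_singleton] at hu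
    push_neg at hu
    rw [hq0def]
    simp [hu.1, hu.2.1]

lemma masterPlan (hcomp : ∀ c : G.ConnectedComponent, 3 ≤ c.supp.ncard) :
    ∀ (k : ℕ) (R : Finset V), R.card = k →
    (∀ v ∈ R, ∀ u, G.Reachable v u → u ∈ R) →
    ∃ (P : List (Step V)) (p : V → V), (flat P).Nodup ∧
      (∀ u, u ∈ flat P ↔ u ∈ R) ∧ StepsOk G p P ∧ (∀ u, u ∉ R → p u = u) := by
  classical
  intro k
  induction k using Nat.strong_induction_on with
  | _ k ih =>
    intro R hcard hclosed
    rcases Finset.eq_empty_or_nonempty R with rfl | ⟨v0, hv0⟩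
    · exact ⟨[], id, List.nodup_nil, by simp [flat], trivial, fun _ _ => rfl⟩
    obtain ⟨Pc, pc, hndc, hmemc, hokc, hrootc⟩ := compPlan G v0 (hcomp _)
    set R' : Finset V := R.filter (fun u => ¬ G.Reachable v0 u) with hR'def
    have hR'card : R'.card < k := by
      rw [← hcard]
      apply Finset.card_lt_card
      constructor
      · exact Finset.filter_subset _ _
      · intro hsub
        have := hsub hv0
        rw [hR'def, Finset.mem_filter] at this
        exact this.2 (SimpleGraph.Reachable.refl v0)
    have hclosed' : ∀ v ∈ R', ∀ u, G.Reachable v u → u ∈ R' := by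
      intro v hv u hvu
      rw [hR'def, Finset.mem_filter] at hv ⊢
      refine ⟨hclosed v hv.1 u hvu, ?_⟩
      intro h
      exact hv.2 (h.trans hvu.symm)
    obtain ⟨P', p', hnd', hmem', hok', hroot'⟩ := ih R'.card hR'card R' rfl hclosed'
    set p : V → V := fun u => if G.Reachable v0 u then pc u else p' u with hpdef
    have hpc : ∀ u, G.Reachable v0 u → p u = pc u := by
      intro u hu; rw [hpdef]; simp [hu]
    have hpp' : ∀ u, ¬ G.Reachable v0 u → p u = p' u := by
      intro u hu; rw [hpdef]; simp [hu]
    refine ⟨Pc ++ P', p, ?_, ?_, ?_, ?_⟩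
    · rw [flat_append]
      apply List.Nodup.append hndc hnd'
      intro u huc hu'
      exact ((hmem' u).1 hu' |> fun h => by
        rw [hR'def, Finset.mem_filter] at h
        exact h.2 ((hmemc u).1 huc))
    · intro u
      rw [flat_append, List.mem_append, hmemc u, hmem' u, hR'def, Finset.mem_filter]
      constructor
      · rintro (h | h)
        · exact hclosed v0 hv0 u h
        · exact h.1
      · intro hu
        by_cases hr : G.Reachable v0 u
        · exact Or.inl hr
        · exact Or.inr ⟨hu, hr⟩
    · apply stepsOk_append
      · apply stepsOk_congr G Pc _ hokc
        intro v hv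
        exact (hpc v ((hmemc v).1 hv)).symm
      · apply stepsOk_congr G P' _ hok'
        intro v hv
        have := (hmem' v).1 hv
        rw [hR'def, Finset.mem_filter] at this
        exact (hpp' v this.2).symm
    · intro u hu
      have hr : ¬ G.Reachable v0 u := fun h => hu (hclosed v0 hv0 u h)
      rw [hpp' u hr]
      apply hroot'
      intro h
      exact hu (Finset.filter_subset _ _ h)


end Stmt2

/-- If `G` has order `n`, no component of order less than 3, and `𝒢` is an
Abelian group of order at least `2n`, then `G` admits a nowhere-zero, non-zero
`𝒢`-irregular edge labeling: edge labels are nonzero, all vertex weights are pairwise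
distinct, and no vertex weight is zero. -/
theorem stmt_2 {V : Type} [Fintype V] [DecidableEq V]
    (G : SimpleGraph V) [DecidableRel G.Adj]
    (hcomp : ∀ c : G.ConnectedComponent, 3 ≤ c.supp.ncard)
    (𝒢 : Type) [AddCommGroup 𝒢] [Fintype 𝒢]
    (hcard : 2 * Fintype.card V ≤ Fintype.card 𝒢) :
    ∃ f : V → V → 𝒢,
      (∀ u v, f u v = f v u) ∧
      (∀ u v, G.Adj u v → f u v ≠ 0) ∧
      Function.Injective (fun v => ∑ u ∈ G.neighborFinset v, f v u) ∧
      (∀ v, (∑ u ∈ G.neighborFinset v, f v u) ≠ 0) := by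
  classical
  by_cases hV : IsEmpty V
  · refine ⟨fun _ _ => 0, ?_, ?_, ?_, ?_⟩
    · intro u; exact (hV.false u).elim
    · intro u; exact (hV.false u).elim
    · intro a; exact (hV.false a).elim
    · intro v; exact (hV.false v).elim
  · haveI hne : Nonempty V := not_isEmpty_iff.mp hV
    have hn1 : 0 < Fintype.card V := Fintype.card_pos
    have hcard2 : 1 < Fintype.card 𝒢 := by omega
    obtain ⟨g0, hg0⟩ := Fintype.exists_ne_of_one_lt_card hcard2 0
    obtain ⟨P, p, hnd, hmem, hok, -⟩ := Stmt2.masterPlan G hcomp (Finset.univ.card)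
      Finset.univ rfl (fun v _ u _ => Finset.mem_univ u)
    have hmem' : ∀ u, u ∈ Stmt2.flat P := fun u => (hmem u).2 (Finset.mem_univ u)
    obtain ⟨x, hx1, hx2, hx3⟩ := Stmt2.greedy G g0 p hcard P (fun _ => 0) hnd hok
      (fun v w hv _ _ => absurd (hmem' v) hv) (fun v hv => absurd (hmem' v) hv)
      (fun v hv => absurd (hmem' v) hv)
    refine ⟨fun u v => Stmt2.fl g0 p x u v, ?_, ?_, ?_, ?_⟩
    · intro u v; exact Stmt2.fl_symm g0 p x u v
    · intro u v huv
      show g0 + (if p u = v then x u else 0) + (if p v = u then x v else 0) ≠ 0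
      by_cases hpu : p u = v <;> by_cases hpv : p v = u
      · exfalso
        exact G.ne_of_adj huv (Stmt2.noTwoCycle G p hok hnd u v (hmem' u) hpu hpv)
      · rw [if_pos hpu, if_neg hpv, add_zero]
        intro h
        have hpune : p u ≠ u := by rw [hpu]; exact (G.ne_of_adj huv).symm
        exact hx1 u hpune (eq_neg_of_add_eq_zero_right h)
      · rw [if_neg hpu, if_pos hpv, add_zero]
        intro h
        have hpvne : p v ≠ v := by rw [hpv]; exact G.ne_of_adj huv
        exact hx1 v hpvne (eq_neg_of_add_eq_zero_right h)
      · rw [if_neg hpu, if_neg hpv, add_zero, add_zero]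
        exact hg0
    · intro a b h
      by_contra hab
      exact hx2 a b hab h
    · intro v
      exact hx3 v
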